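/- Let n ≥ 3, Ω = ZMod n, and let I ⊆ X be such that both coordinate projections of I equal Ω∖{0} and there is a positive integer n_I such that for each x ∈ Ω∖{0} there are exactly n_I elements j with (x,j) ∈ I and exactly n_I elements i with (i,x) ∈ I. Then R_I is a disjoint union of n_I nontrivial 3-circulants, each of which is both 12-thin and 13-thin. -/

import Mathlib

open Set

namespace CirculantAST

/-- The trivial relation `R₀ = {(x,x,x) : x ∈ Ω}`. -/
def triv0 (Ω : Type*) : Set (Ω × Ω × Ω) := {t | t.1 = t.2.1 ∧ t.2.1 = t.2.2}

/-- The trivial relation `R₁ = {(x,y,y) : x ≠ y}`. -/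
def triv1 (Ω : Type*) : Set (Ω × Ω × Ω) := {t | t.1 ≠ t.2.1 ∧ t.2.1 = t.2.2}

/-- The trivial relation `R₂ = {(x,y,x) : x ≠ y}`. -/
def triv2 (Ω : Type*) : Set (Ω × Ω × Ω) := {t | t.1 = t.2.2 ∧ t.1 ≠ t.2.1}

/-- The trivial relation `R₃ = {(x,x,y) : x ≠ y}`. -/
def triv3 (Ω : Type*) : Set (Ω × Ω × Ω) := {t | t.1 = t.2.1 ∧ t.2.1 ≠ t.2.2}

/-- The set of the four trivial relations. -/
def trivials (Ω : Type*) : Set (Set (Ω × Ω × Ω)) := {triv0 Ω, triv1 Ω, triv2 Ω, triv3 Ω}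

/-- Coordinate permutation of a triple: `(x₁,x₂,x₃) ↦ (x_{1σ}, x_{2σ}, x_{3σ})`. -/
def permTriple {Ω : Type*} (σ : Equiv.Perm (Fin 3)) (t : Ω × Ω × Ω) : Ω × Ω × Ω :=
  (![t.1, t.2.1, t.2.2] (σ 0), ![t.1, t.2.1, t.2.2] (σ 1), ![t.1, t.2.1, t.2.2] (σ 2))

/-- An association scheme on triples (AST) on `Ω`, viewed as the set of its relations:
a partition of `Ω³` containing the four trivial relations and at least one further
(nontrivial) relation (i.e. `m ≥ 4`), satisfying axioms A1, A2, A3. -/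
def IsAST (Ω : Type*) (A : Set (Set (Ω × Ω × Ω))) : Prop :=
  -- partition of Ω³ into nonempty relations
  (∀ R ∈ A, R.Nonempty) ∧
  (∀ t : Ω × Ω × Ω, ∃! R, R ∈ A ∧ t ∈ R) ∧
  -- the four trivial relations belong to A
  trivials Ω ⊆ A ∧
  -- m ≥ 4 : there is at least one nontrivial relation
  (∃ R ∈ A, R ∉ trivials Ω) ∧
  -- A1
  (∀ R ∈ A, R ∉ trivials Ω →
    ∃ c : ℕ, 0 < c ∧ ∀ x y : Ω, x ≠ y → {z : Ω | (x, y, z) ∈ R}.ncard = c) ∧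
  -- A2
  (∀ Ri ∈ A, ∀ Rj ∈ A, ∀ Rk ∈ A, ∀ Rl ∈ A, ∃ c : ℕ,
    ∀ x y z : Ω, (x, y, z) ∈ Rl →
      {w : Ω | (w, y, z) ∈ Ri ∧ (x, w, z) ∈ Rj ∧ (x, y, w) ∈ Rk}.ncard = c) ∧
  -- A3
  (∀ R ∈ A, ∀ σ : Equiv.Perm (Fin 3), permTriple σ '' R ∈ A)

variable {n : ℕ}

/-- A ternary relation on `ZMod n` is a 3-circulant if it is invariant under
the simultaneous cyclic shift `+1` in all coordinates. -/
def IsCirculant (R : Set (ZMod n × ZMod n × ZMod n)) : Prop :=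
  ∀ i j k : ZMod n, (i, j, k) ∈ R → (i + 1, j + 1, k + 1) ∈ R

/-- A circulant AST: an AST on `ZMod n` each of whose relations is a 3-circulant. -/
def IsCirculantAST (A : Set (Set (ZMod n × ZMod n × ZMod n))) : Prop :=
  IsAST (ZMod n) A ∧ ∀ R ∈ A, IsCirculant R

/-- A nontrivial 3-circulant: nonempty and all triples have pairwise distinct entries. -/
def IsNontrivialCirculant (R : Set (ZMod n × ZMod n × ZMod n)) : Prop :=
  IsCirculant R ∧ R.Nonempty ∧
    ∀ t ∈ R, t.1 ≠ t.2.1 ∧ t.1 ≠ t.2.2 ∧ t.2.1 ≠ t.2.2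

/-- The set `X = {(i,j) : i ≠ 0, j ≠ 0, i ≠ j}`. -/
def Xset (n : ℕ) : Set (ZMod n × ZMod n) := {p | p.1 ≠ 0 ∧ p.2 ≠ 0 ∧ p.1 ≠ p.2}

/-- The 3-circulant `R_I = {(x, i+x, j+x) : x ∈ Ω, (i,j) ∈ I}`. -/
def RI (I : Set (ZMod n × ZMod n)) : Set (ZMod n × ZMod n × ZMod n) :=
  {t | ∃ x : ZMod n, ∃ p ∈ I, t = (x, p.1 + x, p.2 + x)}

/-- The transpose map `I ↦ I^T = {(j,i) : (i,j) ∈ I}`. -/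
def transI (I : Set (ZMod n × ZMod n)) : Set (ZMod n × ZMod n) :=
  (fun p => (p.2, p.1)) '' I

/-- The map `I ↦ I^τ = {(-i, j-i) : (i,j) ∈ I}`. -/
def tauI (I : Set (ZMod n × ZMod n)) : Set (ZMod n × ZMod n) :=
  (fun p => (-p.1, p.2 - p.1)) '' I

/-- An AST-regular partition of `X`. -/
def IsASTRegular (P : Set (Set (ZMod n × ZMod n))) : Prop :=
  -- a partition of X into nonempty parts
  (∀ I ∈ P, I ⊆ Xset n ∧ I.Nonempty) ∧
  (∀ p ∈ Xset n, ∃! I, I ∈ P ∧ p ∈ I) ∧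
  -- (a) projections and regularity constants
  (∀ I ∈ P, Prod.fst '' I = {x : ZMod n | x ≠ 0} ∧ Prod.snd '' I = {x : ZMod n | x ≠ 0} ∧
    ∃ c : ℕ, 0 < c ∧ ∀ x : ZMod n, x ≠ 0 →
      {j : ZMod n | (x, j) ∈ I}.ncard = c ∧ {i : ZMod n | (i, x) ∈ I}.ncard = c) ∧
  -- (b) invariance under T and τ
  (∀ I ∈ P, transI I ∈ P ∧ tauI I ∈ P) ∧
  -- (c) intersection numbers
  (∀ I ∈ P, ∀ J ∈ P, ∀ K ∈ P, ∀ L ∈ P, ∃ c : ℕ, ∀ q ∈ L,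
    {w : ZMod n | w ≠ 0 ∧ w ≠ q.1 ∧ w ≠ q.2 ∧
      (q.1 - w, q.2 - w) ∈ I ∧ (w, q.2) ∈ J ∧ (q.1, w) ∈ K}.ncard = c)

/-- The family of relations `𝓐(𝓘) = {R₀,R₁,R₂,R₃} ∪ {R_I : I ∈ 𝓘}`. -/
def ASTofPartition (P : Set (Set (ZMod n × ZMod n))) : Set (Set (ZMod n × ZMod n × ZMod n)) :=
  trivials (ZMod n) ∪ (RI '' P)

/-- The projection `σ₁₂ : (x₁,x₂,x₃) ↦ (x₁,x₂)`. -/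
def sgm12 {Ω : Type*} (t : Ω × Ω × Ω) : Ω × Ω := (t.1, t.2.1)

/-- The projection `σ₁₃ : (x₁,x₂,x₃) ↦ (x₁,x₃)`. -/
def sgm13 {Ω : Type*} (t : Ω × Ω × Ω) : Ω × Ω := (t.1, t.2.2)

/-- The projection `σ₂₃ : (x₁,x₂,x₃) ↦ (x₂,x₃)`. -/
def sgm23 {Ω : Type*} (t : Ω × Ω × Ω) : Ω × Ω := (t.2.1, t.2.2)

/-- `R` is thin with respect to the coordinate projection `f = σ_{ab}` if `f` is
one-to-one on `R` with image `Ω^[2] = {(x,y) : x ≠ y}`. -/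
def ThinVia {Ω : Type*} (R : Set (Ω × Ω × Ω)) (f : Ω × Ω × Ω → Ω × Ω) : Prop :=
  Set.InjOn f R ∧ f '' R = {p : Ω × Ω | p.1 ≠ p.2}

/-- Regularity condition of Definition (a) with parameter `c`. -/
def RegPar (I : Set (ZMod n × ZMod n)) (c : ℕ) : Prop :=
  Prod.fst '' I = {x : ZMod n | x ≠ 0} ∧ Prod.snd '' I = {x : ZMod n | x ≠ 0} ∧
  ∀ x : ZMod n, x ≠ 0 →
    {j : ZMod n | (x, j) ∈ I}.ncard = c ∧ {i : ZMod n | (i, x) ∈ I}.ncard = c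

section Helpers

variable {n : ℕ}

lemma mem_RI {J : Set (ZMod n × ZMod n)} {t : ZMod n × ZMod n × ZMod n} :
    t ∈ RI J ↔ (t.2.1 - t.1, t.2.2 - t.1) ∈ J := by
  constructor
  · rintro ⟨x, p, hp, rfl⟩
    simpa using hp
  · intro h
    exact ⟨t.1, _, h, by simp⟩

lemma finset_decomp [NeZero n] (c : ℕ) (A : Finset (ZMod n × ZMod n))
    (hAX : ∀ p ∈ A, p.1 ≠ 0 ∧ p.2 ≠ 0)
    (hrow : ∀ x : ZMod n, x ≠ 0 → (A.filter (fun p => p.1 = x)).card = c)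
    (hcol : ∀ x : ZMod n, x ≠ 0 → (A.filter (fun p => p.2 = x)).card = c) :
    ∃ J : Fin c → Finset (ZMod n × ZMod n),
      (∀ k, J k ⊆ A) ∧
      (∀ k x, x ≠ 0 → ((J k).filter (fun p => p.1 = x)).card = 1 ∧
        ((J k).filter (fun p => p.2 = x)).card = 1) ∧
      (Pairwise fun k l => Disjoint (J k) (J l)) ∧
      (∀ p ∈ A, ∃ k, p ∈ J k) := by
  induction c generalizing A with
  | zero =>
    refine ⟨fun k => k.elim0, fun k => k.elim0, fun k => k.elim0,
      fun k l h => k.elim0, fun p hp => ?_⟩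
    exfalso
    have h0 := hrow p.1 (hAX p hp).1
    have : p ∈ A.filter (fun q => q.1 = p.1) := Finset.mem_filter.mpr ⟨hp, rfl⟩
    rw [Finset.card_eq_zero] at h0
    simp [h0] at this
  | succ c ih =>
    classical
    set ι := {x : ZMod n // x ≠ 0}
    let t : ι → Finset (ZMod n) := fun x => (A.filter (fun p => p.1 = x.val)).image Prod.snd
    have hall : ∀ s : Finset ι, s.card ≤ (s.biUnion t).card := by
      intro s
      have h1 : (s.biUnion (fun x => A.filter (fun p => p.1 = x.val))).card
          = (c + 1) * s.card := by
        rw [Finset.card_biUnion]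
        · rw [Finset.sum_congr rfl (fun x _ => hrow x.val x.2), Finset.sum_const,
            smul_eq_mul, mul_comm]
        · intro x _ y _ hxy
          rw [Function.onFun, Finset.disjoint_left]
          intro p hp hq
          simp only [Finset.mem_filter] at hp hq
          exact hxy (Subtype.ext (hp.2.symm.trans hq.2))
      have hsub : s.biUnion (fun x => A.filter (fun p => p.1 = x.val)) ⊆
          (s.biUnion t).biUnion (fun y => A.filter (fun p => p.2 = y)) := by
        intro p hp
        simp only [Finset.mem_biUnion, Finset.mem_filter] at hp ⊢
        obtain ⟨x, hx, hpA, hp1⟩ := hp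
        exact ⟨p.2, ⟨x, hx, Finset.mem_image.mpr ⟨p, Finset.mem_filter.mpr ⟨hpA, hp1⟩, rfl⟩⟩,
          hpA, rfl⟩
      have h2 : (c + 1) * s.card ≤ (c + 1) * (s.biUnion t).card := by
        rw [← h1]
        calc (s.biUnion (fun x => A.filter (fun p => p.1 = x.val))).card
            ≤ ((s.biUnion t).biUnion (fun y => A.filter (fun p => p.2 = y))).card :=
              Finset.card_le_card hsub
          _ ≤ ∑ y ∈ s.biUnion t, (A.filter (fun p => p.2 = y)).card :=
              Finset.card_biUnion_le
          _ ≤ ∑ _y ∈ s.biUnion t, (c + 1) := by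
              apply Finset.sum_le_sum
              intro y hy
              apply le_of_eq
              apply hcol
              simp only [Finset.mem_biUnion, t, Finset.mem_image, Finset.mem_filter] at hy
              obtain ⟨x, _, p, ⟨hpA, _⟩, rfl⟩ := hy
              exact (hAX p hpA).2
          _ = (c + 1) * (s.biUnion t).card := by
              rw [Finset.sum_const, smul_eq_mul, mul_comm]
      exact Nat.le_of_mul_le_mul_left h2 (Nat.succ_pos c)
    obtain ⟨f, hfinj, hft⟩ := (Finset.all_card_le_biUnion_card_iff_exists_injective t).mp hall
    have hfA : ∀ x : ι, ((x : ZMod n), f x) ∈ A := by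
      intro x
      have := hft x
      simp only [t, Finset.mem_image, Finset.mem_filter] at this
      obtain ⟨p, ⟨hpA, hp1⟩, hp2⟩ := this
      have : p = ((x : ZMod n), f x) := Prod.ext hp1 hp2
      rwa [← this]
    have hf0 : ∀ x : ι, f x ≠ 0 := fun x => (hAX _ (hfA x)).2
    have hfsurj : ∀ y : ZMod n, y ≠ 0 → ∃ x : ι, f x = y := by
      intro y hy
      let g : ι → ι := fun x => ⟨f x, hf0 x⟩
      have hginj : Function.Injective g := fun a b hab =>
        hfinj (congrArg Subtype.val hab)
      have hgsurj : Function.Surjective g := Finite.surjective_of_injective hginj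
      obtain ⟨x, hx⟩ := hgsurj ⟨y, hy⟩
      exact ⟨x, congrArg Subtype.val hx⟩
    set M : Finset (ZMod n × ZMod n) :=
      Finset.univ.image (fun x : ι => ((x : ZMod n), f x)) with hM
    have hMA : M ⊆ A := by
      intro p hp
      simp only [hM, Finset.mem_image] at hp
      obtain ⟨x, _, rfl⟩ := hp
      exact hfA x
    have hMrow : ∀ x : ZMod n, (hx : x ≠ 0) →
        M.filter (fun p => p.1 = x) = {((x : ZMod n), f ⟨x, hx⟩)} := by
      intro x hx
      ext p
      simp only [Finset.mem_filter, hM, Finset.mem_image, Finset.mem_singleton,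
        Finset.mem_univ, true_and]
      constructor
      · rintro ⟨⟨x', rfl⟩, h1⟩
        have : x' = ⟨x, hx⟩ := Subtype.ext h1
        rw [this]
      · rintro rfl
        exact ⟨⟨⟨x, hx⟩, rfl⟩, rfl⟩
    have hMcol : ∀ y : ZMod n, y ≠ 0 → (M.filter (fun p => p.2 = y)).card = 1 := by
      intro y hy
      obtain ⟨x₀, hx₀⟩ := hfsurj y hy
      rw [Finset.card_eq_one]
      refine ⟨((x₀ : ZMod n), y), ?_⟩
      ext p
      simp only [Finset.mem_filter, hM, Finset.mem_image, Finset.mem_singleton,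
        Finset.mem_univ, true_and]
      constructor
      · rintro ⟨⟨x', rfl⟩, h2⟩
        have : x' = x₀ := hfinj (h2.trans hx₀.symm)
        rw [this, hx₀]
      · rintro rfl
        exact ⟨⟨x₀, by rw [hx₀]⟩, rfl⟩
    -- the remaining graph
    have hfilterA' : ∀ (q : ZMod n × ZMod n → Prop) [DecidablePred q],
        (A \ M).filter q = A.filter q \ M.filter q := by
      intro q _
      ext p
      simp only [Finset.mem_filter, Finset.mem_sdiff]
      tauto
    have hrow' : ∀ x : ZMod n, x ≠ 0 → ((A \ M).filter (fun p => p.1 = x)).card = c := by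
      intro x hx
      rw [hfilterA', Finset.card_sdiff_of_subset]
      · rw [hrow x hx, hMrow x hx, Finset.card_singleton]
        omega
      · rw [hMrow x hx]
        intro p hp
        rw [Finset.mem_singleton] at hp
        subst hp
        exact Finset.mem_filter.mpr ⟨hfA ⟨x, hx⟩, rfl⟩
    have hcol' : ∀ y : ZMod n, y ≠ 0 → ((A \ M).filter (fun p => p.2 = y)).card = c := by
      intro y hy
      rw [hfilterA', Finset.card_sdiff_of_subset]
      · rw [hcol y hy, hMcol y hy]
        omega
      · intro p hp
        rw [Finset.mem_filter] at hp
        exact Finset.mem_filter.mpr ⟨hMA hp.1, hp.2⟩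
    obtain ⟨J', hJ'sub, hJ'cnt, hJ'dis, hJ'cov⟩ :=
      ih (A \ M) (fun p hp => hAX p (Finset.mem_sdiff.mp hp).1) hrow' hcol'
    refine ⟨Fin.cons M J', ?_, ?_, ?_, ?_⟩
    · intro k
      induction k using Fin.cases with
      | zero => simpa using hMA
      | succ k => simpa using (hJ'sub k).trans (Finset.sdiff_subset)
    · intro k x hx
      induction k using Fin.cases with
      | zero =>
        simp only [Fin.cons_zero]
        exact ⟨by rw [hMrow x hx, Finset.card_singleton], hMcol x hx⟩
      | succ k => simpa using hJ'cnt k x hx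
    · intro k l hkl
      have hdisjM : ∀ k', Disjoint M (J' k') := by
        intro k'
        rw [Finset.disjoint_left]
        intro p hpM hpJ
        exact (Finset.mem_sdiff.mp (hJ'sub k' hpJ)).2 hpM
      induction k using Fin.cases with
      | zero =>
        induction l using Fin.cases with
        | zero => exact absurd rfl hkl
        | succ l => simpa using hdisjM l
      | succ k =>
        induction l using Fin.cases with
        | zero => simpa using (hdisjM k).symm
        | succ l =>
          simpa using hJ'dis (fun h => hkl (congrArg Fin.succ h))
    · intro p hp
      by_cases hpM : p ∈ M
      · exact ⟨0, by simpa using hpM⟩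
      · obtain ⟨k, hk⟩ := hJ'cov p (Finset.mem_sdiff.mpr ⟨hp, hpM⟩)
        exact ⟨k.succ, by simpa using hk⟩

end Helpers
section Helpers2

variable {n : ℕ}

lemma RI_props [NeZero n] (h1 : (1 : ZMod n) ≠ 0) (J : Finset (ZMod n × ZMod n))
    (hJX : ∀ p ∈ J, p.1 ≠ 0 ∧ p.2 ≠ 0 ∧ p.1 ≠ p.2)
    (hrow : ∀ x : ZMod n, x ≠ 0 → (J.filter (fun p => p.1 = x)).card = 1)
    (hcol : ∀ x : ZMod n, x ≠ 0 → (J.filter (fun p => p.2 = x)).card = 1) :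
    IsNontrivialCirculant (RI (↑J : Set (ZMod n × ZMod n))) ∧
    ThinVia (RI (↑J : Set (ZMod n × ZMod n))) sgm12 ∧
    ThinVia (RI (↑J : Set (ZMod n × ZMod n))) sgm13 := by
  classical
  have rowu : ∀ x : ZMod n, x ≠ 0 → ∃ p, p ∈ J ∧ p.1 = x ∧
      ∀ q ∈ J, q.1 = x → q = p := by
    intro x hx
    obtain ⟨a, ha⟩ := Finset.card_eq_one.mp (hrow x hx)
    have haf : a ∈ J.filter (fun p => p.1 = x) := ha ▸ Finset.mem_singleton_self a
    rw [Finset.mem_filter] at haf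
    refine ⟨a, haf.1, haf.2, fun q hq hqx => ?_⟩
    have : q ∈ J.filter (fun p => p.1 = x) := Finset.mem_filter.mpr ⟨hq, hqx⟩
    rwa [ha, Finset.mem_singleton] at this
  have colu : ∀ y : ZMod n, y ≠ 0 → ∃ p, p ∈ J ∧ p.2 = y ∧
      ∀ q ∈ J, q.2 = y → q = p := by
    intro y hy
    obtain ⟨a, ha⟩ := Finset.card_eq_one.mp (hcol y hy)
    have haf : a ∈ J.filter (fun p => p.2 = y) := ha ▸ Finset.mem_singleton_self a
    rw [Finset.mem_filter] at haf
    refine ⟨a, haf.1, haf.2, fun q hq hqy => ?_⟩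
    have : q ∈ J.filter (fun p => p.2 = y) := Finset.mem_filter.mpr ⟨hq, hqy⟩
    rwa [ha, Finset.mem_singleton] at this
  have hdist : ∀ t ∈ RI (↑J : Set (ZMod n × ZMod n)),
      t.1 ≠ t.2.1 ∧ t.1 ≠ t.2.2 ∧ t.2.1 ≠ t.2.2 := by
    intro t ht
    rw [mem_RI] at ht
    obtain ⟨h1', h2', h3'⟩ := hJX _ ht
    refine ⟨?_, ?_, ?_⟩
    · intro h; exact h1' (by rw [h, sub_self])
    · intro h; exact h2' (by rw [h, sub_self])
    · intro h
      apply h3'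
      have : t.2.1 - t.1 = t.2.2 - t.1 := by rw [h]
      simpa using this
  refine ⟨⟨?_, ?_, hdist⟩, ⟨?_, ?_⟩, ⟨?_, ?_⟩⟩
  · -- circulant
    intro i j k hijk
    rw [mem_RI] at hijk ⊢
    simpa using hijk
  · -- nonempty
    obtain ⟨p, hpJ, _, _⟩ := rowu 1 h1
    exact ⟨(0, p.1, p.2), mem_RI.mpr (by simpa using hpJ)⟩
  · -- 12-inj
    intro s hs u hu heq
    replace hs := mem_RI.mp hs
    replace hu := mem_RI.mp hu
    simp only [sgm12, Prod.mk.injEq] at heq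
    obtain ⟨e1, e2⟩ := heq
    have hi0 : s.2.1 - s.1 ≠ 0 := (hJX _ hs).1
    obtain ⟨p, _, _, hup⟩ := rowu (s.2.1 - s.1) hi0
    have hsp := hup _ hs rfl
    have hup2 := hup _ hu (by rw [← e1, ← e2])
    have e3 : s.2.2 - s.1 = u.2.2 - u.1 := by
      have := (hsp.trans hup2.symm)
      exact congrArg Prod.snd this
    have e4 : s.2.2 = u.2.2 := by
      have := congrArg (· + s.1) e3
      simpa [e1] using this
    exact Prod.ext e1 (Prod.ext e2 e4)
  · -- 12-image
    ext q
    simp only [Set.mem_image, Set.mem_setOf_eq]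
    constructor
    · rintro ⟨s, hs, rfl⟩
      exact (hdist s hs).1
    · intro hq
      have hi0 : q.2 - q.1 ≠ 0 := sub_ne_zero.mpr (Ne.symm hq)
      obtain ⟨p, hpJ, hp1, _⟩ := rowu (q.2 - q.1) hi0
      refine ⟨(q.1, q.2, p.2 + q.1), mem_RI.mpr ?_, rfl⟩
      simp only [add_sub_cancel_right]
      have : (q.2 - q.1, p.2) = p := Prod.ext hp1.symm rfl
      rw [this]
      exact hpJ
  · -- 13-inj
    intro s hs u hu heq
    replace hs := mem_RI.mp hs
    replace hu := mem_RI.mp hu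
    simp only [sgm13, Prod.mk.injEq] at heq
    obtain ⟨e1, e2⟩ := heq
    have hj0 : s.2.2 - s.1 ≠ 0 := (hJX _ hs).2.1
    obtain ⟨p, _, _, hup⟩ := colu (s.2.2 - s.1) hj0
    have hsp := hup _ hs rfl
    have hup2 := hup _ hu (by rw [← e1, ← e2])
    have e3 : s.2.1 - s.1 = u.2.1 - u.1 := congrArg Prod.fst (hsp.trans hup2.symm)
    have e4 : s.2.1 = u.2.1 := by
      have := congrArg (· + s.1) e3
      simpa [e1] using this
    exact Prod.ext e1 (Prod.ext e4 e2)
  · -- 13-image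
    ext q
    simp only [Set.mem_image, Set.mem_setOf_eq]
    constructor
    · rintro ⟨s, hs, rfl⟩
      exact (hdist s hs).2.1
    · intro hq
      have hj0 : q.2 - q.1 ≠ 0 := sub_ne_zero.mpr (Ne.symm hq)
      obtain ⟨p, hpJ, hp2, _⟩ := colu (q.2 - q.1) hj0
      refine ⟨(q.1, p.1 + q.1, q.2), mem_RI.mpr ?_, rfl⟩
      simp only [add_sub_cancel_right]
      have : (p.1, q.2 - q.1) = p := Prod.ext rfl hp2.symm
      rw [this]
      exact hpJ
  -- note: ThinVia s sgm12/13 `s hs` memberships: f '' R form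

end Helpers2
/-- If `I ⊆ X` satisfies the regularity condition with parameter
`n_I > 0`, then `R_I` is a disjoint union of `n_I` nontrivial 3-circulants, each of
which is both `12`-thin and `13`-thin. -/
theorem RI_disjoint_union_of_thin (n : ℕ) (hn : 3 ≤ n)
    (I : Set (ZMod n × ZMod n)) (hIX : I ⊆ Xset n)
    (nI : ℕ) (hnI : 0 < nI) (hreg : RegPar I nI) :
    ∃ S : Fin nI → Set (ZMod n × ZMod n × ZMod n),
      (∀ k, IsNontrivialCirculant (S k) ∧ ThinVia (S k) sgm12 ∧ ThinVia (S k) sgm13) ∧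
      (Pairwise fun k l => Disjoint (S k) (S l)) ∧
      RI I = ⋃ k, S k := by
  classical
  haveI : NeZero n := ⟨by omega⟩
  haveI : Fact (1 < n) := ⟨by omega⟩
  have h1 : (1 : ZMod n) ≠ 0 := one_ne_zero
  set A : Finset (ZMod n × ZMod n) := (Set.toFinite I).toFinset with hA
  have hAmem : ∀ p, p ∈ A ↔ p ∈ I := fun p => Set.Finite.mem_toFinset _
  have hAX : ∀ p ∈ A, p.1 ≠ 0 ∧ p.2 ≠ 0 ∧ p.1 ≠ p.2 := by
    intro p hp
    exact hIX ((hAmem p).mp hp)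
  have hrowA : ∀ x : ZMod n, x ≠ 0 → (A.filter (fun p => p.1 = x)).card = nI := by
    intro x hx
    have hr := (hreg.2.2 x hx).1
    rw [← hr]
    have himg : {j | (x, j) ∈ I} = ↑((A.filter (fun p => p.1 = x)).image Prod.snd) := by
      ext j
      simp only [Set.mem_setOf_eq, Finset.coe_image, Set.mem_image, Finset.mem_coe,
        Finset.mem_filter, hAmem]
      constructor
      · intro hj
        exact ⟨(x, j), ⟨⟨hj, rfl⟩, rfl⟩⟩
      · rintro ⟨p, ⟨⟨hpA, hp1⟩, rfl⟩⟩
        rw [← hp1]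
        exact hpA
    rw [himg, Set.ncard_coe_finset, Finset.card_image_of_injOn]
    intro p hp q hq h
    simp only [Finset.coe_filter, Set.mem_setOf_eq] at hp hq
    exact Prod.ext (hp.2.trans hq.2.symm) h
  have hcolA : ∀ x : ZMod n, x ≠ 0 → (A.filter (fun p => p.2 = x)).card = nI := by
    intro x hx
    have hr := (hreg.2.2 x hx).2
    rw [← hr]
    have himg : {i | (i, x) ∈ I} = ↑((A.filter (fun p => p.2 = x)).image Prod.fst) := by
      ext i
      simp only [Set.mem_setOf_eq, Finset.coe_image, Set.mem_image, Finset.mem_coe,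
        Finset.mem_filter, hAmem]
      constructor
      · intro hi
        exact ⟨(i, x), ⟨⟨hi, rfl⟩, rfl⟩⟩
      · rintro ⟨p, ⟨⟨hpA, hp2⟩, rfl⟩⟩
        rw [← hp2]
        exact hpA
    rw [himg, Set.ncard_coe_finset, Finset.card_image_of_injOn]
    intro p hp q hq h
    simp only [Finset.coe_filter, Set.mem_setOf_eq] at hp hq
    exact Prod.ext h (hp.2.trans hq.2.symm)
  obtain ⟨J, hJsub, hJcnt, hJdis, hJcov⟩ := finset_decomp nI A
    (fun p hp => ⟨(hAX p hp).1, (hAX p hp).2.1⟩) hrowA hcolA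
  refine ⟨fun k => RI (↑(J k) : Set (ZMod n × ZMod n)), ?_, ?_, ?_⟩
  · intro k
    exact RI_props h1 (J k) (fun p hp => hAX p (hJsub k hp))
      (fun x hx => (hJcnt k x hx).1) (fun x hx => (hJcnt k x hx).2)
  · intro k l hkl
    rw [Set.disjoint_left]
    intro t htk htl
    replace htk := mem_RI.mp htk
    replace htl := mem_RI.mp htl
    exact (Finset.disjoint_left.mp (hJdis hkl)) htk htl
  · ext t
    simp only [Set.mem_iUnion]
    constructor
    · intro ht
      have := mem_RI.mp ht
      obtain ⟨k, hk⟩ := hJcov _ ((hAmem _).mpr this)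
      exact ⟨k, mem_RI.mpr hk⟩
    · rintro ⟨k, hk⟩
      exact mem_RI.mpr ((hAmem _).mp (hJsub k (mem_RI.mp hk)))

end CirculantAST
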